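/- In a competitive market with indivisible goods where each consumer's utility is the q_k-satiation of a nonnegative additively separable valuation, a Walrasian equilibrium exists. -/

import Mathlib

open Finset

set_option linter.unusedSectionVars false

section Aux

variable {I L : Type*} [Fintype I] [Fintype L] [DecidableEq I] [DecidableEq L]

private lemma exists_eps_aux (F : Finset ℝ) :
    ∃ ε : ℝ, 0 < ε ∧ ε ≤ 1 ∧ ∀ x ∈ F, 0 < x → ε ≤ x := by
  classical
  set G : Finset ℝ := insert 1 (F.filter fun x => 0 < x) with hG
  have hne : G.Nonempty := ⟨1, by simp [hG]⟩
  have key : ∀ y ∈ G, 0 < y := by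
    intro y hy
    rw [hG, mem_insert] at hy
    rcases hy with hy | hy
    · rw [hy]; norm_num
    · exact (mem_filter.mp hy).2
  refine ⟨G.min' hne, key _ (G.min'_mem hne), ?_, ?_⟩
  · exact G.min'_le 1 (by simp [hG])
  · intro x hx hxpos
    exact G.min'_le x (by simp [hG, mem_filter, hx, hxpos])

private lemma merge_chain (R : I → L → Prop) (A₀ : Finset I) (P : Finset L)
    (g : {l // l ∈ P} → I) (hginj : Function.Injective g)
    (hgR : ∀ l : {l // l ∈ P}, R (g l) l.val ∧ g l ∈ A₀) :
    ∀ (c : ℕ) (m : I → Option L),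
      (∀ i j l, m i = some l → m j = some l → i = j) →
      (∀ i l, m i = some l → R i l ∧ i ∈ A₀) →
      P.attach.card - (P.attach.filter (fun l => m (g l) = some l.val)).card ≤ c →
      ∀ l0 : {l // l ∈ P}, (∀ i, m i ≠ some l0.val) →
      ∃ m' : I → Option L,
        (∀ i j l, m' i = some l → m' j = some l → i = j) ∧
        (∀ i l, m' i = some l → R i l ∧ i ∈ A₀) ∧
        (∀ i, m i ≠ none → m' i ≠ none) ∧
        (∀ l ∈ P, (∃ i, m i = some l) → ∃ i, m' i = some l) ∧
        (∃ i, m' i = some l0.val) := by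
  intro c
  induction c with
  | zero =>
    intro m hm1 hm2 hcard l0 hl0
    exfalso
    have hsub : P.attach.filter (fun l => m (g l) = some l.val) ⊆ P.attach := filter_subset _ _
    have hcardle : P.attach.card ≤ (P.attach.filter (fun l => m (g l) = some l.val)).card := by
      omega
    have heq : P.attach.filter (fun l => m (g l) = some l.val) = P.attach :=
      eq_of_subset_of_card_le hsub hcardle
    have hl0mem : l0 ∈ P.attach.filter (fun l => m (g l) = some l.val) := by
      rw [heq]; exact mem_attach _ _
    exact hl0 (g l0) (mem_filter.mp hl0mem).2
  | succ c ih =>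
    intro m hm1 hm2 hcard l0 hl0
    set i1 := g l0 with hi1
    -- basic validity of the updated function
    have hupd_valid : ∀ x : Option L, x = some l0.val →
        (∀ i j l, Function.update m i1 x i = some l → Function.update m i1 x j = some l → i = j) ∧
        (∀ i l, Function.update m i1 x i = some l → R i l ∧ i ∈ A₀) ∧
        (∀ i, m i ≠ none → Function.update m i1 x i ≠ none) ∧
        (∃ i, Function.update m i1 x i = some l0.val) := by
      rintro x rfl
      refine ⟨?_, ?_, ?_, ⟨i1, by simp⟩⟩
      · intro i j l hi hj
        by_cases hii : i = i1 <;> by_cases hjj : j = i1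
        · rw [hii, hjj]
        · subst hii
          rw [Function.update_self] at hi
          rw [Function.update_of_ne hjj] at hj
          rw [← hi] at hj
          exact absurd hj (hl0 j)
        · subst hjj
          rw [Function.update_self] at hj
          rw [Function.update_of_ne hii] at hi
          rw [← hj] at hi
          exact absurd hi (hl0 i)
        · rw [Function.update_of_ne hii] at hi
          rw [Function.update_of_ne hjj] at hj
          exact hm1 i j l hi hj
      · intro i l hi
        by_cases hii : i = i1
        · subst hii
          rw [Function.update_self] at hi
          obtain rfl : l0.val = l := by injection hi
          exact hgR l0
        · rw [Function.update_of_ne hii] at hi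
          exact hm2 i l hi
      · intro i hi
        by_cases hii : i = i1
        · subst hii; simp
        · rw [Function.update_of_ne hii]; exact hi
    cases h1 : m i1 with
    | none =>
      obtain ⟨c1, c2, c3, c5⟩ := hupd_valid (some l0.val) rfl
      refine ⟨Function.update m i1 (some l0.val), c1, c2, c3, ?_, c5⟩
      intro l hl ⟨i, hi⟩
      have hii : i ≠ i1 := fun h => by rw [h, h1] at hi; exact absurd hi (by simp)
      exact ⟨i, by rw [Function.update_of_ne hii]; exact hi⟩
    | some l1 =>
      obtain ⟨c1, c2, c3, c5⟩ := hupd_valid (some l0.val) rfl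
      set m2 := Function.update m i1 (some l0.val) with hm2def
      -- goods preserved from m to m2, except possibly l1
      have hpres : ∀ l, l ≠ l1 → (∃ i, m i = some l) → ∃ i, m2 i = some l := by
        rintro l hne ⟨i, hi⟩
        have hii : i ≠ i1 := by
          intro h; rw [h, h1] at hi
          exact hne ((Option.some.inj hi).symm)
        exact ⟨i, by rw [hm2def, Function.update_of_ne hii]; exact hi⟩
      by_cases hl1P : l1 ∈ P
      · -- recurse on l1
        have hl0ne : l0.val ≠ l1 := by
          intro h
          exact hl0 i1 (by rw [h1, h])
        have hun : ∀ i, m2 i ≠ some l1 := by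
          intro i hi
          by_cases hii : i = i1
          · rw [hii, hm2def, Function.update_self] at hi
            exact hl0ne (by injection hi)
          · rw [hm2def, Function.update_of_ne hii] at hi
            exact hii (hm1 i i1 l1 hi h1)
        -- the measure decreases
        have hmono : P.attach.filter (fun l => m (g l) = some l.val) ⊂
            P.attach.filter (fun l => m2 (g l) = some l.val) := by
          constructor
          · intro l hl
            rw [mem_filter] at hl ⊢
            refine ⟨hl.1, ?_⟩
            have hne : g l ≠ i1 := by
              intro h
              have hll : l = l0 := hginj (by rw [h, hi1])
              subst hll
              exact hl0 (g l) hl.2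
            rw [hm2def, Function.update_of_ne hne]
            exact hl.2
          · intro hsub
            have hl0mem : l0 ∈ P.attach.filter (fun l => m2 (g l) = some l.val) := by
              rw [mem_filter]
              exact ⟨mem_attach _ _, by rw [hm2def, Function.update_self]⟩
            have := (mem_filter.mp (hsub hl0mem)).2
            exact hl0 (g l0) this
        have hmeas : P.attach.card - (P.attach.filter (fun l => m2 (g l) = some l.val)).card ≤ c := by
          have h1c := card_lt_card hmono
          have h2c : (P.attach.filter (fun l => m2 (g l) = some l.val)).card ≤ P.attach.card :=
            card_le_card (filter_subset _ _)
          omega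
        obtain ⟨m', d1, d2, d3, d4, d5⟩ := ih m2 c1 c2 hmeas ⟨l1, hl1P⟩ hun
        refine ⟨m', d1, d2, fun i hi => d3 i (c3 i hi), ?_, ?_⟩
        · intro l hl hex
          by_cases hne : l = l1
          · subst hne; exact d5
          · exact d4 l hl (hpres l hne hex)
        · exact d4 l0.val l0.2 ⟨i1, by rw [hm2def, Function.update_self]⟩
      · -- l1 ∉ P : done
        refine ⟨m2, c1, c2, c3, ?_, c5⟩
        intro l hl hex
        have hne : l ≠ l1 := fun h => hl1P (h ▸ hl)
        exact hpres l hne hex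

private lemma merge_all (R : I → L → Prop) (A₀ : Finset I) (P : Finset L)
    (g : {l // l ∈ P} → I) (hginj : Function.Injective g)
    (hgR : ∀ l : {l // l ∈ P}, R (g l) l.val ∧ g l ∈ A₀) :
    ∀ (u : ℕ) (m : I → Option L),
      (∀ i j l, m i = some l → m j = some l → i = j) →
      (∀ i l, m i = some l → R i l ∧ i ∈ A₀) →
      (P.filter (fun l => ∀ i, m i ≠ some l)).card ≤ u →
      ∃ m' : I → Option L,
        (∀ i j l, m' i = some l → m' j = some l → i = j) ∧
        (∀ i l, m' i = some l → R i l ∧ i ∈ A₀) ∧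
        (∀ i, m i ≠ none → m' i ≠ none) ∧
        (∀ l ∈ P, ∃ i, m' i = some l) := by
  intro u
  induction u with
  | zero =>
    intro m hm1 hm2 hcard
    refine ⟨m, hm1, hm2, fun _ h => h, ?_⟩
    intro l hl
    by_contra hno
    push_neg at hno
    have : l ∈ P.filter (fun l => ∀ i, m i ≠ some l) := mem_filter.mpr ⟨hl, hno⟩
    have := card_pos.mpr ⟨l, this⟩
    omega
  | succ u ih =>
    intro m hm1 hm2 hcard
    by_cases hemp : (P.filter (fun l => ∀ i, m i ≠ some l)).Nonempty
    · obtain ⟨l0, hl0mem⟩ := hemp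
      rw [mem_filter] at hl0mem
      obtain ⟨hl0P, hl0un⟩ := hl0mem
      obtain ⟨m'', d1, d2, d3, d4, d5⟩ :=
        merge_chain R A₀ P g hginj hgR P.attach.card m hm1 hm2 (Nat.sub_le _ _)
          ⟨l0, hl0P⟩ hl0un
      have hsub : P.filter (fun l => ∀ i, m'' i ≠ some l) ⊆
          (P.filter (fun l => ∀ i, m i ≠ some l)).erase l0 := by
        intro l hl
        rw [mem_filter] at hl
        rw [mem_erase, mem_filter]
        refine ⟨?_, hl.1, ?_⟩
        · intro h
          subst h
          obtain ⟨i, hi⟩ := d5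
          exact hl.2 i hi
        · intro i hi
          obtain ⟨i', hi'⟩ := d4 l hl.1 ⟨i, hi⟩
          exact hl.2 i' hi'
      have hmem : l0 ∈ P.filter (fun l => ∀ i, m i ≠ some l) := mem_filter.mpr ⟨hl0P, hl0un⟩
      have hcard2 : (P.filter (fun l => ∀ i, m'' i ≠ some l)).card ≤ u := by
        have := card_le_card hsub
        have := card_erase_of_mem hmem
        have := card_pos.mpr ⟨l0, hmem⟩
        omega
      obtain ⟨m', e1, e2, e3, e4⟩ := ih m'' d1 d2 hcard2
      exact ⟨m', e1, e2, fun i hi => e3 i (d3 i hi), e4⟩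
    · rw [not_nonempty_iff_eq_empty] at hemp
      refine ⟨m, hm1, hm2, fun _ h => h, ?_⟩
      intro l hl
      by_contra hno
      push_neg at hno
      have : l ∈ P.filter (fun l => ∀ i, m i ≠ some l) := mem_filter.mpr ⟨hl, hno⟩
      rw [hemp] at this
      exact notMem_empty _ this


-- Equilibrium machinery for the unit-demand (cloned) economy
variable [Nonempty L]


variable {I L : Type*} [Fintype I] [Fintype L] [DecidableEq I] [DecidableEq L] [Nonempty L]

private noncomputable def muF (v : I → L → ℝ) (p : L → ℝ) (i : I) : ℝ :=
  univ.sup' univ_nonempty (fun l => v i l - p l)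

private noncomputable def DF (v : I → L → ℝ) (p : L → ℝ) : ℝ :=
  ∑ l, p l + ∑ i, max (muF v p i) 0

private noncomputable def MF (v : I → L → ℝ) : ℝ := 1 + ∑ i, ∑ l, v i l

private lemma muF_le {v : I → L → ℝ} {p : L → ℝ} {i : I} {a : ℝ}
    (h : ∀ l, v i l - p l ≤ a) : muF v p i ≤ a :=
  sup'_le _ _ (fun l _ => h l)

private lemma le_muF (v : I → L → ℝ) (p : L → ℝ) (i : I) (l : L) :
    v i l - p l ≤ muF v p i := by
  simp only [muF]
  exact le_sup' (fun l => v i l - p l) (mem_univ l)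

private lemma exists_eq_muF (v : I → L → ℝ) (p : L → ℝ) (i : I) :
    ∃ l, v i l - p l = muF v p i := by
  obtain ⟨l, _, hl⟩ := exists_mem_eq_sup' (univ_nonempty (α := L)) (fun l => v i l - p l)
  exact ⟨l, hl.symm⟩

private lemma le_MF {v : I → L → ℝ} (hv : ∀ i l, 0 ≤ v i l) (i : I) (l : L) :
    v i l + 1 ≤ MF v := by
  have h1 : v i l ≤ ∑ l', v i l' := single_le_sum (fun l' _ => hv i l') (mem_univ l)
  have h2 : ∑ l', v i l' ≤ ∑ i', ∑ l', v i' l' :=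
    single_le_sum (f := fun i' => ∑ l', v i' l')
      (fun i' _ => sum_nonneg fun l' _ => hv i' l') (mem_univ i)
  rw [MF]; linarith

private lemma MF_nonneg {v : I → L → ℝ} (hv : ∀ i l, 0 ≤ v i l) : 0 ≤ MF v := by
  have : (0:ℝ) ≤ ∑ i, ∑ l, v i l :=
    sum_nonneg fun i _ => sum_nonneg fun l _ => hv i l
  rw [MF]; linarith

private lemma continuous_DF (v : I → L → ℝ) : Continuous (DF v) := by
  apply Continuous.add
  · exact continuous_finset_sum _ (fun l _ => continuous_apply l)
  · apply continuous_finset_sum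
    intro i _
    have h1 : Continuous (fun p : L → ℝ => muF v p i) := by
      have heq : (fun p : L → ℝ => muF v p i)
          = univ.sup' univ_nonempty (fun l (p : L → ℝ) => v i l - p l) := by
        funext p
        rw [Finset.sup'_apply]
        rfl
      rw [heq]
      exact Continuous.finset_sup' _
        (fun l _ => (continuous_const.sub (continuous_apply l)))
    exact h1.max continuous_const

private lemma exists_minimizer (v : I → L → ℝ) (hv : ∀ i l, 0 ≤ v i l) :
    ∃ p ∈ Set.Icc (0 : L → ℝ) (fun _ => MF v),
      ∀ r ∈ Set.Icc (0 : L → ℝ) (fun _ => MF v), DF v p ≤ DF v r := by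
  have hC : IsCompact (Set.Icc (0 : L → ℝ) (fun _ => MF v)) := isCompact_Icc
  have hne : (Set.Icc (0 : L → ℝ) (fun _ => MF v)).Nonempty :=
    ⟨0, le_refl _, fun l => MF_nonneg hv⟩
  obtain ⟨p, hp, hmin⟩ := hC.exists_isMinOn hne (continuous_DF v).continuousOn
  exact ⟨p, hp, fun r hr => hmin hr⟩

private lemma hall_goods (v : I → L → ℝ) (p : L → ℝ)
    (hp0 : ∀ l, 0 ≤ p l) (hpM : ∀ l, p l ≤ MF v)
    (hmin : ∀ r ∈ Set.Icc (0 : L → ℝ) (fun _ => MF v), DF v p ≤ DF v r)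
    (T : Finset L) (hT : ∀ l ∈ T, 0 < p l) :
    T.card ≤ (univ.filter
      (fun i => 0 ≤ muF v p i ∧ ∃ l ∈ T, v i l - p l = muF v p i)).card := by
  classical
  obtain ⟨ε, hε0, hε1, hεle⟩ := exists_eps_aux
    (((univ : Finset (I × L)).image (fun il => muF v p il.1 - (v il.1 il.2 - p il.2))
      ∪ (univ : Finset I).image (fun i => -(muF v p i))) ∪ T.image p)
  have hgap : ∀ i l, v i l - p l < muF v p i → ε ≤ muF v p i - (v i l - p l) := by
    intro i l h
    refine hεle _ ?_ (by linarith)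
    exact mem_union_left _ (mem_union_left _ (mem_image.mpr ⟨(i, l), mem_univ _, rfl⟩))
  have hmuneg : ∀ i, muF v p i < 0 → ε ≤ -(muF v p i) := by
    intro i h
    refine hεle _ ?_ (by linarith)
    exact mem_union_left _ (mem_union_right _ (mem_image.mpr ⟨i, mem_univ _, rfl⟩))
  have hpT : ∀ l ∈ T, ε ≤ p l := by
    intro l hl
    exact hεle _ (mem_union_right _ (mem_image_of_mem p hl)) (hT l hl)
  set r : L → ℝ := fun l => if l ∈ T then p l - ε else p l with hr
  have hrmem : r ∈ Set.Icc (0 : L → ℝ) (fun _ => MF v) := by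
    constructor
    · intro l
      by_cases h : l ∈ T <;> simp only [hr, h, if_true, if_false, Pi.zero_apply]
      · linarith [hpT l h]
      · exact hp0 l
    · intro l
      by_cases h : l ∈ T <;> simp only [hr, h, if_true, if_false]
      · linarith [hpM l]
      · exact hpM l
  have hsum : ∑ l, r l = ∑ l, p l - ε * T.card := by
    have : ∀ l, r l = p l - (if l ∈ T then ε else 0) := by
      intro l; by_cases h : l ∈ T <;> simp [hr, h]
    rw [Finset.sum_congr rfl (fun l _ => this l), Finset.sum_sub_distrib]
    congr 1
    rw [Finset.sum_ite_mem, univ_inter, Finset.sum_const, nsmul_eq_mul, mul_comm]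
  have hub : ∀ i, muF v r i ≤ muF v p i + ε := by
    intro i
    apply muF_le
    intro l
    by_cases h : l ∈ T <;> simp only [hr, h, if_true, if_false]
    · have := le_muF v p i l; linarith
    · have := le_muF v p i l; linarith
  have hper : ∀ i, max (muF v r i) 0 - max (muF v p i) 0
      ≤ (if 0 ≤ muF v p i ∧ ∃ l ∈ T, v i l - p l = muF v p i then ε else 0) := by
    intro i
    by_cases hcond : 0 ≤ muF v p i ∧ ∃ l ∈ T, v i l - p l = muF v p i
    · rw [if_pos hcond]
      have h1 : max (muF v r i) 0 ≤ max (muF v p i) 0 + ε := by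
        apply max_le
        · have := hub i
          have := le_max_left (muF v p i) 0
          linarith
        · have := le_max_right (muF v p i) 0
          linarith
      linarith
    · rw [if_neg hcond]
      push_neg at hcond
      by_cases hneg : muF v p i < 0
      · have h1 : muF v r i ≤ 0 := by
          have := hmuneg i hneg
          have := hub i
          linarith
        rw [max_eq_right h1, max_eq_right hneg.le]
        norm_num
      · push_neg at hneg
        have key : muF v r i ≤ muF v p i := by
          apply muF_le
          intro l
          by_cases h : l ∈ T <;> simp only [hr, h, if_true, if_false]
          · have hne : v i l - p l ≠ muF v p i := hcond hneg l h
            have hlt : v i l - p l < muF v p i := lt_of_le_of_ne (le_muF v p i l) hne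
            have := hgap i l hlt
            linarith
          · exact le_muF v p i l
        have := max_le_max key (le_refl (0:ℝ))
        linarith
  have hDle := hmin r hrmem
  rw [DF, DF, hsum] at hDle
  have hsum2 : ∑ i, max (muF v r i) 0 ≤ ∑ i, max (muF v p i) 0
      + ε * (univ.filter
        (fun i => 0 ≤ muF v p i ∧ ∃ l ∈ T, v i l - p l = muF v p i)).card := by
    have h1 : ∑ i, (max (muF v r i) 0 - max (muF v p i) 0)
        ≤ ∑ i, (if 0 ≤ muF v p i ∧ ∃ l ∈ T, v i l - p l = muF v p i then ε else 0) :=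
      sum_le_sum (fun i _ => hper i)
    rw [Finset.sum_sub_distrib] at h1
    rw [Finset.sum_ite, Finset.sum_const, Finset.sum_const] at h1
    simp only [nsmul_eq_mul, mul_zero, add_zero] at h1
    linarith [h1]
  have hfinal : ε * (T.card : ℝ) ≤ ε * ((univ.filter
      (fun i => 0 ≤ muF v p i ∧ ∃ l ∈ T, v i l - p l = muF v p i)).card : ℝ) := by
    linarith
  have := le_of_mul_le_mul_left hfinal hε0
  exact_mod_cast this

private lemma hall_consumers (v : I → L → ℝ) (hv : ∀ i l, 0 ≤ v i l) (p : L → ℝ)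
    (hp0 : ∀ l, 0 ≤ p l) (hpM : ∀ l, p l ≤ MF v)
    (hmin : ∀ r ∈ Set.Icc (0 : L → ℝ) (fun _ => MF v), DF v p ≤ DF v r)
    (S : Finset I) (hS : ∀ i ∈ S, 0 < muF v p i) :
    S.card ≤ (univ.filter (fun l => ∃ i ∈ S, v i l - p l = muF v p i)).card := by
  classical
  set N := univ.filter (fun l => ∃ i ∈ S, v i l - p l = muF v p i) with hN
  obtain ⟨ε, hε0, hε1, hεle⟩ := exists_eps_aux
    (((univ : Finset (I × L)).image (fun il => muF v p il.1 - (v il.1 il.2 - p il.2))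
      ∪ S.image (muF v p)) ∪ (univ : Finset L).image (fun l => MF v - p l))
  have hgap : ∀ i l, v i l - p l < muF v p i → ε ≤ muF v p i - (v i l - p l) := by
    intro i l h
    refine hεle _ ?_ (by linarith)
    exact mem_union_left _ (mem_union_left _ (mem_image.mpr ⟨(i, l), mem_univ _, rfl⟩))
  have hmuS : ∀ i ∈ S, ε ≤ muF v p i := by
    intro i hi
    exact hεle _ (mem_union_left _ (mem_union_right _ (mem_image_of_mem _ hi))) (hS i hi)
  have hroom : ∀ l ∈ N, ε ≤ MF v - p l := by
    intro l hl
    rw [hN, mem_filter] at hl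
    obtain ⟨-, i, hiS, heq⟩ := hl
    have h1 : 0 < MF v - p l := by
      have h2 := le_MF hv i l
      have h3 := hS i hiS
      linarith
    exact hεle _ (mem_union_right _ (mem_image.mpr ⟨l, mem_univ _, rfl⟩)) h1
  set r : L → ℝ := fun l => if l ∈ N then p l + ε else p l with hr
  have hrmem : r ∈ Set.Icc (0 : L → ℝ) (fun _ => MF v) := by
    constructor
    · intro l
      by_cases h : l ∈ N <;> simp only [hr, h, if_true, if_false, Pi.zero_apply]
      · linarith [hp0 l]
      · exact hp0 l
    · intro l
      by_cases h : l ∈ N <;> simp only [hr, h, if_true, if_false]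
      · linarith [hroom l h]
      · exact hpM l
  have hsum : ∑ l, r l = ∑ l, p l + ε * N.card := by
    have : ∀ l, r l = p l + (if l ∈ N then ε else 0) := by
      intro l; by_cases h : l ∈ N <;> simp [hr, h]
    rw [Finset.sum_congr rfl (fun l _ => this l), Finset.sum_add_distrib]
    congr 1
    rw [Finset.sum_ite_mem, univ_inter, Finset.sum_const, nsmul_eq_mul, mul_comm]
  have hper : ∀ i, max (muF v r i) 0 - max (muF v p i) 0
      ≤ (if i ∈ S then -ε else 0) := by
    intro i
    by_cases hiS : i ∈ S
    · rw [if_pos hiS]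
      have hub : muF v r i ≤ muF v p i - ε := by
        apply muF_le
        intro l
        by_cases h : l ∈ N <;> simp only [hr, h, if_true, if_false]
        · have := le_muF v p i l; linarith
        · have hnotin : ¬ ∃ i' ∈ S, v i' l - p l = muF v p i' := by
            intro hcon
            exact absurd (mem_filter.mpr ⟨mem_univ l, hcon⟩) (by rw [← hN] at *; exact h)
          push_neg at hnotin
          have hne := hnotin i hiS
          have hlt : v i l - p l < muF v p i := lt_of_le_of_ne (le_muF v p i l) hne
          have := hgap i l hlt
          linarith
      have hmu : 0 < muF v p i := hS i hiS
      have h1 : max (muF v r i) 0 ≤ muF v p i - ε := by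
        apply max_le hub
        have := hmuS i hiS
        linarith
      rw [max_eq_left hmu.le]
      linarith
    · rw [if_neg hiS]
      have key : muF v r i ≤ muF v p i := by
        apply muF_le
        intro l
        by_cases h : l ∈ N <;> simp only [hr, h, if_true, if_false]
        · have := le_muF v p i l; linarith
        · exact le_muF v p i l
      have := max_le_max key (le_refl (0:ℝ))
      linarith
  have hDle := hmin r hrmem
  rw [DF, DF, hsum] at hDle
  have hsum2 : ∑ i, max (muF v r i) 0 ≤ ∑ i, max (muF v p i) 0 - ε * S.card := by
    have h1 : ∑ i, (max (muF v r i) 0 - max (muF v p i) 0)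
        ≤ ∑ i, (if i ∈ S then -ε else 0) := sum_le_sum (fun i _ => hper i)
    rw [Finset.sum_sub_distrib, Finset.sum_ite_mem, univ_inter, Finset.sum_const,
      nsmul_eq_mul] at h1
    linarith
  have hfinal : ε * (S.card : ℝ) ≤ ε * (N.card : ℝ) := by linarith
  have := le_of_mul_le_mul_left hfinal hε0
  exact_mod_cast this

private lemma unit_equilibrium (v : I → L → ℝ) (hv : ∀ i l, 0 ≤ v i l) :
    ∃ (p : L → ℝ) (m : I → Option L),
      (∀ l, 0 ≤ p l) ∧
      (∀ i j l, m i = some l → m j = some l → i = j) ∧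
      (∀ i l, m i = some l → 0 ≤ v i l - p l ∧ ∀ l', v i l' - p l' ≤ v i l - p l) ∧
      (∀ i, m i = none → ∀ l', v i l' - p l' ≤ 0) ∧
      (∀ l, (∀ i, m i ≠ some l) → p l = 0) := by
  classical
  obtain ⟨p, hpbox, hmin⟩ := exists_minimizer v hv
  have hp0 : ∀ l, 0 ≤ p l := fun l => hpbox.1 l
  have hpM : ∀ l, p l ≤ MF v := fun l => hpbox.2 l
  set A : Finset I := univ.filter (fun i => 0 < muF v p i) with hA
  set P : Finset L := univ.filter (fun l => 0 < p l) with hP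
  have hAmem : ∀ i, i ∈ A ↔ 0 < muF v p i := by
    intro i; rw [hA, mem_filter]; simp
  have hPmem : ∀ l, l ∈ P ↔ 0 < p l := by
    intro l; rw [hP, mem_filter]; simp
  -- consumer-side Hall
  have hallC : ∀ s : Finset {i // i ∈ A},
      s.card ≤ (s.biUnion (fun i =>
        univ.filter (fun l => v i.val l - p l = muF v p i.val))).card := by
    intro s
    have h1 : (s.image Subtype.val).card = s.card :=
      card_image_of_injective _ Subtype.val_injective
    have hS : ∀ i ∈ s.image Subtype.val, 0 < muF v p i := by
      intro i hi
      obtain ⟨i', _, rfl⟩ := mem_image.mp hi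
      exact (hAmem _).mp i'.2
    have h2 := hall_consumers v hv p hp0 hpM hmin (s.image Subtype.val) hS
    have h3 : univ.filter (fun l => ∃ i ∈ s.image Subtype.val, v i l - p l = muF v p i)
        = s.biUnion (fun i => univ.filter (fun l => v i.val l - p l = muF v p i.val)) := by
      ext l
      simp only [mem_filter, mem_biUnion, mem_image, mem_univ, true_and]
      constructor
      · rintro ⟨i, ⟨i', hi', rfl⟩, heq⟩
        exact ⟨i', hi', heq⟩
      · rintro ⟨i', hi', heq⟩
        exact ⟨i'.val, ⟨i', hi', rfl⟩, heq⟩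
    rw [h3] at h2
    omega
  obtain ⟨f, hfinj, hfmem⟩ :=
    (Finset.all_card_le_biUnion_card_iff_exists_injective _).mp hallC
  -- goods-side Hall
  have hallG : ∀ s : Finset {l // l ∈ P},
      s.card ≤ (s.biUnion (fun l =>
        univ.filter (fun i => 0 ≤ muF v p i ∧ v i l.val - p l.val = muF v p i))).card := by
    intro s
    have h1 : (s.image Subtype.val).card = s.card :=
      card_image_of_injective _ Subtype.val_injective
    have hT : ∀ l ∈ s.image Subtype.val, 0 < p l := by
      intro l hl
      obtain ⟨l', _, rfl⟩ := mem_image.mp hl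
      exact (hPmem _).mp l'.2
    have h2 := hall_goods v p hp0 hpM hmin (s.image Subtype.val) hT
    have h3 : univ.filter (fun i => 0 ≤ muF v p i ∧
          ∃ l ∈ s.image Subtype.val, v i l - p l = muF v p i)
        = s.biUnion (fun l =>
          univ.filter (fun i => 0 ≤ muF v p i ∧ v i l.val - p l.val = muF v p i)) := by
      ext i
      simp only [mem_filter, mem_biUnion, mem_image, mem_univ, true_and]
      constructor
      · rintro ⟨h0, l, ⟨l', hl', rfl⟩, heq⟩
        exact ⟨l', hl', h0, heq⟩
      · rintro ⟨l', hl', h0, heq⟩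
        exact ⟨h0, l'.val, ⟨l', hl', rfl⟩, heq⟩
    rw [h3] at h2
    omega
  obtain ⟨g, hginj, hgmem⟩ :=
    (Finset.all_card_le_biUnion_card_iff_exists_injective _).mp hallG
  -- initial matching from consumer side
  set m0 : I → Option L := fun i => if h : i ∈ A then some (f ⟨i, h⟩) else none with hm0
  have hm0some : ∀ (i) (h : i ∈ A), m0 i = some (f ⟨i, h⟩) := by
    intro i h; simp only [hm0]; rw [dif_pos h]
  have hm0none : ∀ i, i ∉ A → m0 i = none := by
    intro i h; simp only [hm0]; rw [dif_neg h]
  have hm01 : ∀ i j l, m0 i = some l → m0 j = some l → i = j := by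
    intro i j l hi hj
    by_cases hiA : i ∈ A
    · by_cases hjA : j ∈ A
      · rw [hm0some i hiA] at hi
        rw [hm0some j hjA] at hj
        have heq : f ⟨i, hiA⟩ = f ⟨j, hjA⟩ := by
          rw [Option.some.inj hi, Option.some.inj hj]
        have := hfinj heq
        exact congrArg Subtype.val this
      · rw [hm0none j hjA] at hj; exact absurd hj (by simp)
    · rw [hm0none i hiA] at hi; exact absurd hi (by simp)
  have hm02 : ∀ i l, m0 i = some l →
      (v i l - p l = muF v p i) ∧ i ∈ univ.filter (fun i => 0 ≤ muF v p i) := by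
    intro i l hi
    by_cases hiA : i ∈ A
    · rw [hm0some i hiA] at hi
      obtain rfl : f ⟨i, hiA⟩ = l := Option.some.inj hi
      have hmem := hfmem ⟨i, hiA⟩
      rw [mem_filter] at hmem
      have h0 : 0 < muF v p i := (hAmem _).mp hiA
      exact ⟨hmem.2, mem_filter.mpr ⟨mem_univ _, h0.le⟩⟩
    · rw [hm0none i hiA] at hi; exact absurd hi (by simp)
  have hgR : ∀ l : {l // l ∈ P}, (v (g l) l.val - p l.val = muF v p (g l))
      ∧ g l ∈ univ.filter (fun i => 0 ≤ muF v p i) := by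
    intro l
    have := hgmem l
    rw [mem_filter] at this
    exact ⟨this.2.2, mem_filter.mpr ⟨mem_univ _, this.2.1⟩⟩
  obtain ⟨m, c1, c2, c3, c4⟩ :=
    merge_all (fun i l => v i l - p l = muF v p i)
      (univ.filter (fun i => 0 ≤ muF v p i)) P g hginj hgR
      (P.filter (fun l => ∀ i, m0 i ≠ some l)).card m0 hm01 hm02 le_rfl
  refine ⟨p, m, hp0, c1, ?_, ?_, ?_⟩
  · intro i l hil
    obtain ⟨hR, hA₀⟩ := c2 i l hil
    have h0 : 0 ≤ muF v p i := (mem_filter.mp hA₀).2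
    constructor
    · rw [hR]; exact h0
    · intro l'
      rw [hR]
      exact le_muF v p i l'
  · intro i hi l'
    have hiA : i ∉ A := by
      intro hiA
      have hne : m0 i ≠ none := by rw [hm0some i hiA]; exact Option.some_ne_none _
      exact (c3 i hne) hi
    have hle : ¬ 0 < muF v p i := fun h => hiA ((hAmem _).mpr h)
    push_neg at hle
    have := le_muF v p i l'
    linarith
  · intro l hl
    have hlP : l ∉ P := by
      intro hlP
      obtain ⟨i, hi⟩ := c4 l hlP
      exact hl i hi
    have hnp : ¬ 0 < p l := fun h => hlP ((hPmem _).mpr h)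
    linarith [hp0 l]


end Aux

/-- Existence of a Walrasian equilibrium in a competitive market with
indivisible goods where each consumer's utility is the `q k`-satiation of a
nonnegative additively separable valuation: there are nonnegative prices `p`
and a partition `(X₀, X₁, …, X_K)` of the goods such that each consumer's
bundle maximizes his net utility, and every good in `X₀` has price zero. -/
theorem walrasian_equilibrium_exists {L : Type*} [Fintype L] [DecidableEq L] {K : ℕ}
    (w : Fin K → L → ℝ) (hw : ∀ k l, 0 ≤ w k l) (q : Fin K → ℕ)
    (U : Fin K → Finset L → ℝ)
    (hU : ∀ k (A : Finset L),
      IsGreatest {x | ∃ B ⊆ A, B.card ≤ q k ∧ x = ∑ l ∈ B, w k l} (U k A)) :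
    ∃ (p : L → ℝ) (X : Fin K → Finset L) (X0 : Finset L),
      (∀ l, 0 ≤ p l) ∧
      (∀ k, Disjoint X0 (X k)) ∧
      (∀ k j, k ≠ j → Disjoint (X k) (X j)) ∧
      (X0 ∪ Finset.univ.biUnion X = Finset.univ) ∧
      (∀ k (A : Finset L), U k A - ∑ l ∈ A, p l ≤ U k (X k) - ∑ l ∈ X k, p l) ∧
      (∀ l ∈ X0, p l = 0) := by
  classical
  cases isEmpty_or_nonempty L with
  | inl hE =>
    refine ⟨fun _ => 0, fun _ => ∅, ∅, fun _ => le_refl _, fun _ => disjoint_empty_left _,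
      fun _ _ _ => disjoint_empty_left _, ?_, ?_, fun l _ => rfl⟩
    · have hall0 : ∀ (s : Finset L), s = ∅ :=
        fun s => eq_empty_of_forall_notMem (fun x _ => (hE.false x).elim)
      rw [hall0 (∅ ∪ Finset.univ.biUnion fun _ => ∅), hall0 univ]
    · intro k A
      have hA : A = ∅ := eq_empty_of_forall_notMem (fun x _ => (hE.false x).elim)
      rw [hA]
  | inr hne =>
    obtain ⟨p, m, h1, h2, h3, h4, h5⟩ :=
      unit_equilibrium (I := (k : Fin K) × Fin (q k)) (fun i l => w i.1 l)
        (fun i l => hw i.1 l)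
    set X : Fin K → Finset L :=
      fun k => univ.filter (fun l => ∃ j : Fin (q k), m ⟨k, j⟩ = some l) with hX
    have hXmem : ∀ k l, l ∈ X k ↔ ∃ j : Fin (q k), m ⟨k, j⟩ = some l := by
      intro k l; rw [hX]; simp [mem_filter]
    refine ⟨p, X, univ \ univ.biUnion X, h1, ?_, ?_, ?_, ?_, ?_⟩
    · intro k
      exact sdiff_disjoint.mono_right (subset_biUnion_of_mem X (mem_univ k))
    · intro k j hkj
      rw [disjoint_left]
      intro l hlk hlj
      obtain ⟨jk, hjk⟩ := (hXmem k l).mp hlk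
      obtain ⟨jj, hjj⟩ := (hXmem j l).mp hlj
      have := h2 _ _ _ hjk hjj
      exact hkj (congrArg Sigma.fst this)
    · exact sdiff_union_of_subset (subset_univ _)
    · intro k A
      obtain ⟨B, hBA, hBcard, hBsum⟩ := (hU k A).1
      have hXm : ∀ l ∈ X k, ∃ j : Fin (q k), m ⟨k, j⟩ = some l :=
        fun l hl => (hXmem k l).mp hl
      have hcard : (X k).card ≤ q k := by
        rcases Nat.eq_zero_or_pos (q k) with h0 | hpos
        · have hX0 : X k = ∅ := by
            apply eq_empty_of_forall_notMem
            intro l hl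
            obtain ⟨j, _⟩ := hXm l hl
            exact absurd j.isLt (by omega)
          rw [hX0, card_empty]
          omega
        · have hnefin : Nonempty (Fin (q k)) := ⟨⟨0, hpos⟩⟩
          have hle := card_le_card_of_injOn (s := X k) (t := univ)
            (f := fun l => if h : ∃ j : Fin (q k), m ⟨k, j⟩ = some l
              then h.choose else Classical.arbitrary _)
            (fun l _ => mem_univ _) ?_
          · rw [card_univ, Fintype.card_fin] at hle
            exact hle
          · intro l1 hl1 l2 hl2 heq
            have he1 := hXm l1 hl1
            have he2 := hXm l2 hl2
            simp only [dif_pos he1, dif_pos he2] at heq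
            have hs1 := he1.choose_spec
            have hs2 := he2.choose_spec
            rw [heq] at hs1
            rw [hs1] at hs2
            exact Option.some.inj hs2
      have hUX : U k (X k) = ∑ l ∈ X k, w k l := by
        apply le_antisymm
        · obtain ⟨B', hB', hc', hs'⟩ := (hU k (X k)).1
          rw [hs']
          exact sum_le_sum_of_subset_of_nonneg hB' (fun l _ _ => hw k l)
        · exact (hU k (X k)).2 ⟨X k, Finset.Subset.refl _, hcard, rfl⟩
      have hstep1 : ∑ l ∈ B, p l ≤ ∑ l ∈ A, p l :=
        sum_le_sum_of_subset_of_nonneg hBA (fun l _ _ => h1 l)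
      have hstep2 : ∑ l ∈ B, (w k l - p l) ≤ ∑ l ∈ X k, (w k l - p l) := by
        by_cases hall : ∀ j : Fin (q k), m ⟨k, j⟩ ≠ none
        · have hfull : ∀ j : Fin (q k), ∃ l, m ⟨k, j⟩ = some l := by
            intro j
            cases h : m ⟨k, j⟩ with
            | none => exact absurd h (hall j)
            | some l => exact ⟨l, rfl⟩
          choose F hF using hfull
          have hFX : ∀ j, F j ∈ X k := fun j => (hXmem k (F j)).mpr ⟨j, hF j⟩
          have hFinj : Function.Injective F := by
            intro j j' hFe
            have heq := h2 ⟨k, j⟩ ⟨k, j'⟩ (F j) (hF j) (by rw [hFe]; exact hF j')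
            have hj := (Sigma.mk.inj_iff.mp heq).2
            exact eq_of_heq hj
          have hqle : q k ≤ (X k).card := by
            have := card_le_card_of_injOn (s := (univ : Finset (Fin (q k)))) (t := X k) F (fun j _ => hFX j) hFinj.injOn
            rw [card_univ, Fintype.card_fin] at this
            exact this
          have hXcard : (X k).card = q k := le_antisymm hcard hqle
          rcases Nat.eq_zero_or_pos (q k) with h0 | hpos
          · have hB0 : B = ∅ := card_eq_zero.mp (by omega)
            have hX0 : X k = ∅ := card_eq_zero.mp (by omega)
            rw [hB0, hX0]
          · obtain ⟨lstar, hlstar⟩ := card_pos.mp (by omega : 0 < (X k).card)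
            obtain ⟨jstar, hjstar⟩ := hXm lstar hlstar
            have hsmax : ∀ l', w k l' - p l' ≤ w k lstar - p lstar := (h3 _ _ hjstar).2
            have hs0 : 0 ≤ w k lstar - p lstar := (h3 _ _ hjstar).1
            have hXconst : ∀ l ∈ X k, w k l - p l = w k lstar - p lstar := by
              intro l hl
              obtain ⟨j, hj⟩ := hXm l hl
              exact le_antisymm (hsmax l) ((h3 _ _ hj).2 lstar)
            calc ∑ l ∈ B, (w k l - p l)
                ≤ B.card • (w k lstar - p lstar) :=
                  sum_le_card_nsmul _ _ _ (fun l _ => hsmax l)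
              _ ≤ (q k) • (w k lstar - p lstar) := nsmul_le_nsmul_left hs0 hBcard
              _ = (X k).card • (w k lstar - p lstar) := by rw [hXcard]
              _ = ∑ _l ∈ X k, (w k lstar - p lstar) := (sum_const _).symm
              _ = ∑ l ∈ X k, (w k l - p l) :=
                  sum_congr rfl (fun l hl => (hXconst l hl).symm)
        · push_neg at hall
          obtain ⟨j0, hj0⟩ := hall
          have hneg : ∀ l', w k l' - p l' ≤ 0 := h4 _ hj0
          calc ∑ l ∈ B, (w k l - p l) ≤ 0 := sum_nonpos (fun l _ => hneg l)
            _ ≤ ∑ l ∈ X k, (w k l - p l) := by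
                apply sum_nonneg
                intro l hl
                obtain ⟨j, hj⟩ := hXm l hl
                exact (h3 _ _ hj).1
      rw [hUX, hBsum]
      have e1 : ∑ l ∈ B, (w k l - p l) = ∑ l ∈ B, w k l - ∑ l ∈ B, p l :=
        sum_sub_distrib _ _
      have e2 : ∑ l ∈ X k, (w k l - p l) = ∑ l ∈ X k, w k l - ∑ l ∈ X k, p l :=
        sum_sub_distrib _ _
      linarith
    · intro l hl
      apply h5
      intro i hi
      rw [mem_sdiff] at hl
      apply hl.2
      apply mem_biUnion.mpr ⟨i.1, mem_univ _, ?_⟩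
      apply (hXmem i.1 l).mpr
      exact ⟨i.2, by rw [← hi]⟩
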